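/- In a simplified (κ,1)-morass, if α < β ≤ κ, ξ₀, ξ₁ < θ_α, f₀, f₁ ∈ F_{α,β}, and f₀(ξ₀) = f₁(ξ₁), then ξ₀ = ξ₁ and f₀ and f₁ agree on all ordinals below ξ₀. -/

import Mathlib

/-- A simplified (κ,1)-morass, with morass maps represented as total functions on the
ordinals, order-embeddings of θ_α into θ_β on the relevant domains. -/
structure SimplifiedMorass (κ : Cardinal.{0}) where
  θ : Ordinal → Ordinal
  F : Ordinal → Ordinal → Set (Ordinal → Ordinal)
  /-- (P0)(a) -/
  theta_zero : θ 0 = 2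
  theta_pos : ∀ α < κ.ord, 0 < θ α
  theta_small : ∀ α < κ.ord, (θ α).card < κ
  theta_top : θ κ.ord = (Order.succ κ).ord
  /-- (P0)(b): members of F α β are order-embeddings from θ_α into θ_β -/
  embed : ∀ α β, α < β → β ≤ κ.ord → ∀ f ∈ F α β,
    (∀ ξ η, ξ < η → η < θ α → f ξ < f η) ∧ (∀ ξ < θ α, f ξ < θ β)
  /-- (P1) -/
  P1 : ∀ α β, α < β → β < κ.ord → Cardinal.mk ↥(F α β) < Cardinal.lift.{1} κ
  /-- (P2) -/
  P2 : ∀ α β γ, α < β → β < γ → γ ≤ κ.ord →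
    F α γ = {h | ∃ f ∈ F β γ, ∃ g ∈ F α β, h = f ∘ g}
  /-- (P3) -/
  P3 : ∀ α < κ.ord, ∃ δ : Ordinal, 0 < δ ∧ δ < θ α ∧
    θ (α + 1) = θ α + (θ α - δ) ∧
    F α (α + 1) = {id, fun ξ => if ξ < δ then ξ else θ α + (ξ - δ)}
  /-- (P4) -/
  P4 : ∀ lam ≤ κ.ord, Order.IsSuccLimit lam → ∀ α₀ < lam, ∀ α₁ < lam,
    ∀ f₀ ∈ F α₀ lam, ∀ f₁ ∈ F α₁ lam,
    ∃ α, α₀ < α ∧ α₁ < α ∧ α < lam ∧ ∃ g ∈ F α lam,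
      ∃ f₀' ∈ F α₀ α, ∃ f₁' ∈ F α₁ α, f₀ = g ∘ f₀' ∧ f₁ = g ∘ f₁'
  /-- (P5) -/
  P5 : ∀ α, 0 < α → α ≤ κ.ord → ∀ η < θ α,
    ∃ ξ, ξ < α ∧ ∃ f ∈ F ξ α, ∃ ζ < θ ξ, f ζ = η

/-- A strictly increasing function below `θ` is injective below `θ`. -/
lemma morass_mono_inj {θ : Ordinal} {f : Ordinal → Ordinal}
    (h : ∀ ξ η, ξ < η → η < θ → f ξ < f η) :
    ∀ ξ < θ, ∀ η < θ, f ξ = f η → ξ = η := by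
  intro ξ hξ η hη hfe
  rcases lt_trichotomy ξ η with h1 | h1 | h1
  · exact absurd hfe (h ξ η h1 hη).ne
  · exact h1
  · exact absurd hfe.symm (h η ξ h1 hξ).ne

/-- The successor-step case of the key claim: for maps in `F γ (γ+1)`. -/
lemma morass_succ_step (κ : Cardinal.{0}) (M : SimplifiedMorass κ)
    (γ : Ordinal) (hγ : γ < κ.ord) (hβ : γ + 1 ≤ κ.ord) :
    ∀ ξ₀ < M.θ γ, ∀ ξ₁ < M.θ γ, ∀ f₀ ∈ M.F γ (γ + 1), ∀ f₁ ∈ M.F γ (γ + 1),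
    f₀ ξ₀ = f₁ ξ₁ → ξ₀ = ξ₁ ∧ ∀ ζ < ξ₀, f₀ ζ = f₁ ζ := by
  obtain ⟨δ, hδ0, hδθ, hθs, hF⟩ := M.P3 γ hγ
  intro ξ₀ hξ₀ ξ₁ hξ₁ f₀ hf₀ f₁ hf₁ heq
  have hmem₁ : (fun ξ => if ξ < δ then ξ else M.θ γ + (ξ - δ)) ∈ M.F γ (γ + 1) := by
    rw [hF]; right; rfl
  have hmono := (M.embed γ (γ + 1) (lt_add_one γ) hβ _ hmem₁).1
  rw [hF] at hf₀ hf₁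
  simp only [Set.mem_insert_iff, Set.mem_singleton_iff] at hf₀ hf₁
  rcases hf₀ with rfl | rfl <;> rcases hf₁ with rfl | rfl
  · exact ⟨heq, fun _ _ => rfl⟩
  · -- f₀ = id, f₁ = fδ
    simp only [id] at heq
    by_cases h : ξ₁ < δ
    · simp only [h, if_pos] at heq
      refine ⟨heq, fun ζ hζ => ?_⟩
      have : ζ < δ := lt_trans (heq ▸ hζ) h
      simp [this]
    · simp only [h, if_neg, not_false_iff] at heq
      exact absurd (heq ▸ hξ₀) (not_lt.2 (le_self_add))
  · -- f₀ = fδ, f₁ = id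
    simp only [id] at heq
    by_cases h : ξ₀ < δ
    · simp only [h, if_pos] at heq
      refine ⟨heq, fun ζ hζ => ?_⟩
      have : ζ < δ := lt_trans hζ h
      simp [this]
    · simp only [h, if_neg, not_false_iff] at heq
      exact absurd (heq ▸ hξ₁) (not_lt.2 (le_self_add))
  · exact ⟨morass_mono_inj hmono ξ₀ hξ₀ ξ₁ hξ₁ heq, fun _ _ => rfl⟩

/-- Key claim, by transfinite induction on `β`. -/
lemma morass_key (κ : Cardinal.{0}) (M : SimplifiedMorass κ) :
    ∀ β, ∀ α, α < β → β ≤ κ.ord →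
    ∀ ξ₀ < M.θ α, ∀ ξ₁ < M.θ α, ∀ f₀ ∈ M.F α β, ∀ f₁ ∈ M.F α β,
    f₀ ξ₀ = f₁ ξ₁ → ξ₀ = ξ₁ ∧ ∀ ζ < ξ₀, f₀ ζ = f₁ ζ := by
  intro β
  induction β using Ordinal.induction with
  | h β IH =>
  intro α hαβ hβ ξ₀ hξ₀ ξ₁ hξ₁ f₀ hf₀ f₁ hf₁ heq
  rcases Ordinal.zero_or_succ_or_isSuccLimit β with rfl | ⟨γ, rfl⟩ | hb
  · exact absurd hαβ (not_lt_of_ge (zero_le (a := α)))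
  · rw [← Ordinal.add_one_eq_succ] at hαβ hβ hf₀ hf₁
    have hγκ : γ < κ.ord := lt_of_lt_of_le (lt_add_one γ) hβ
    have hαγ : α ≤ γ := by
      rw [Ordinal.add_one_eq_succ] at hαβ
      exact Order.lt_succ_iff.1 hαβ
    rcases eq_or_lt_of_le hαγ with rfl | hαγ
    · exact morass_succ_step κ M α hγκ hβ ξ₀ hξ₀ ξ₁ hξ₁ f₀ hf₀ f₁ hf₁ heq
    · -- decompose via P2
      have hP2 := M.P2 α γ (γ + 1) hαγ (lt_add_one γ) hβ
      rw [hP2] at hf₀ hf₁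
      obtain ⟨F₀, hF₀, g₀, hg₀, rfl⟩ := hf₀
      obtain ⟨F₁, hF₁, g₁, hg₁, rfl⟩ := hf₁
      have hemb₀ := M.embed α γ hαγ hγκ.le g₀ hg₀
      have hemb₁ := M.embed α γ hαγ hγκ.le g₁ hg₁
      have hη₀ : g₀ ξ₀ < M.θ γ := hemb₀.2 ξ₀ hξ₀
      have hη₁ : g₁ ξ₁ < M.θ γ := hemb₁.2 ξ₁ hξ₁
      obtain ⟨hη, hFag⟩ := morass_succ_step κ M γ hγκ hβ _ hη₀ _ hη₁ F₀ hF₀ F₁ hF₁ heq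
      obtain ⟨hξ, hgag⟩ := IH γ (lt_add_one γ) α hαγ hγκ.le ξ₀ hξ₀ ξ₁ hξ₁ g₀ hg₀ g₁ hg₁ hη
      refine ⟨hξ, fun ζ hζ => ?_⟩
      have h1 : g₀ ζ < g₀ ξ₀ := hemb₀.1 ζ ξ₀ hζ hξ₀
      calc F₀ (g₀ ζ) = F₁ (g₀ ζ) := hFag _ h1
        _ = F₁ (g₁ ζ) := by rw [hgag ζ hζ]
  · -- limit case
    obtain ⟨α', h0, -, hα'β, g, hg, f₀', hf₀', f₁', hf₁', he₀, he₁⟩ :=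
      M.P4 β hβ hb α hαβ α hαβ f₀ hf₀ f₁ hf₁
    have hα'κ : α' ≤ κ.ord := hα'β.le.trans hβ
    have hemb₀ := M.embed α α' h0 hα'κ f₀' hf₀'
    have hemb₁ := M.embed α α' h0 hα'κ f₁' hf₁'
    have hgmono := (M.embed α' β hα'β hβ g hg).1
    have heq' : f₀' ξ₀ = f₁' ξ₁ := by
      apply morass_mono_inj hgmono _ (hemb₀.2 ξ₀ hξ₀) _ (hemb₁.2 ξ₁ hξ₁)
      rw [he₀, he₁] at heq
      exact heq
    obtain ⟨hξ, hag⟩ := IH α' hα'β α h0 hα'κ ξ₀ hξ₀ ξ₁ hξ₁ f₀' hf₀' f₁' hf₁' heq'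
    refine ⟨hξ, fun ζ hζ => ?_⟩
    rw [he₀, he₁]
    simp only [Function.comp]
    rw [hag ζ hζ]
/-- In a simplified (κ,1)-morass, if α < β ≤ κ, ξ₀, ξ₁ < θ_α, f₀, f₁ ∈ F_{α,β} and
f₀(ξ₀) = f₁(ξ₁), then ξ₀ = ξ₁ and f₀, f₁ agree below ξ₀. -/
theorem stmt_17 (κ : Cardinal.{0}) (hκ : Cardinal.aleph0 ≤ κ) (M : SimplifiedMorass κ)
    (α β : Ordinal) (hαβ : α < β) (hβ : β ≤ κ.ord)
    (ξ₀ ξ₁ : Ordinal) (hξ₀ : ξ₀ < M.θ α) (hξ₁ : ξ₁ < M.θ α)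
    (f₀ f₁ : Ordinal → Ordinal) (hf₀ : f₀ ∈ M.F α β) (hf₁ : f₁ ∈ M.F α β)
    (heq : f₀ ξ₀ = f₁ ξ₁) :
    ξ₀ = ξ₁ ∧ ∀ ζ < ξ₀, f₀ ζ = f₁ ζ := by
  exact morass_key κ M β α hαβ hβ ξ₀ hξ₀ ξ₁ hξ₁ f₀ hf₀ f₁ hf₁ heq
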